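/- Let Γ be a group with a finite symmetric generating set S, acting freely, properly discontinuously, and cocompactly by isometries on a proper geodesic metric space X, and acting continuously and properly on a locally compact Hausdorff space P (properness meaning: for every compact K ⊆ P the set {γ : (γ·K) ∩ K ≠ ∅} is finite). Let p : P → ℝ^N be a continuous proper map satisfying the Displacement Bound Condition ‖p(z) − p(γ·z)‖ ≤ ‖γ‖_S for all γ ∈ Γ and z ∈ P. Then there exists a continuous map α : X × P → ℝ^N such that: (1) α(γ·x, γ·z) = α(x, z) for all γ ∈ Γ, x ∈ X, z ∈ P (invariance under the diagonal action); (2) for every x ∈ X, the map z ↦ α(x, z) is proper; (3) for every z ∈ P, the map x ↦ α(x, z) is 1-Lipschitz. -/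

import Mathlib

/-- The word norm of `g` with respect to a generating set `S`: the least `n` such
that `g` is a product of `n` elements of `S`. -/
noncomputable def wordNorm {G : Type*} [Group G] (S : Set G) (g : G) : ℕ :=
  sInf {n : ℕ | ∃ l : List G, (∀ s ∈ l, s ∈ S) ∧ l.prod = g ∧ l.length = n}

/-- A metric space is geodesic if any two points `x, x'` are joined by an isometric
image of the interval `[0, d(x, x')]`. -/
def IsGeodesicSpace (X : Type*) [MetricSpace X] : Prop :=
  ∀ x x' : X, ∃ γ : ℝ → X, γ 0 = x ∧ γ (dist x x') = x' ∧
    ∀ s ∈ Set.Icc (0 : ℝ) (dist x x'), ∀ t ∈ Set.Icc (0 : ℝ) (dist x x'),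
      dist (γ s) (γ t) = |s - t|

namespace PropThree

variable {G : Type*} [Group G] {X : Type*} [MetricSpace X] [MulAction G X]

/-- A Lipschitz bump function centered at the orbit point `γ • x₀`. -/
noncomputable def bump (R : ℝ) (x₀ : X) (γ : G) (x : X) : ℝ :=
  max (R - dist x (γ • x₀)) 0

lemma bump_nonneg (R : ℝ) (x₀ : X) (γ : G) (x : X) : 0 ≤ bump R x₀ γ x :=
  le_max_right _ _

lemma bump_le (R : ℝ) (hR : 0 ≤ R) (x₀ : X) (γ : G) (x : X) : bump R x₀ γ x ≤ R :=
  max_le (by linarith [dist_nonneg (x := x) (y := γ • x₀)]) hR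

lemma le_bump (R : ℝ) (x₀ : X) (γ : G) (x : X) : R - dist x (γ • x₀) ≤ bump R x₀ γ x :=
  le_max_left _ _

lemma dist_lt_of_bump_ne {R : ℝ} {x₀ : X} {γ : G} {x : X} (h : bump R x₀ γ x ≠ 0) :
    dist x (γ • x₀) < R := by
  by_contra h'
  exact h (max_eq_right (by linarith [not_lt.1 h'])) 

lemma abs_bump_sub_le (R : ℝ) (x₀ : X) (γ : G) (x y : X) :
    |bump R x₀ γ x - bump R x₀ γ y| ≤ dist x y := by
  refine (abs_max_sub_max_le_abs _ _ _).trans ?_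
  have : R - dist x (γ • x₀) - (R - dist y (γ • x₀)) = dist y (γ • x₀) - dist x (γ • x₀) := by
    ring
  rw [this, abs_sub_comm]
  exact abs_dist_sub_le _ _ _

lemma bump_smul (hiso : ∀ (γ : G) (x y : X), dist (γ • x) (γ • y) = dist x y)
    (R : ℝ) (x₀ : X) (η γ : G) (x : X) :
    bump R x₀ (η * γ) (η • x) = bump R x₀ γ x := by
  unfold bump
  rw [mul_smul, hiso η]

lemma bump_cont (R : ℝ) (x₀ : X) (γ : G) : Continuous (bump R x₀ γ) :=
  ((continuous_const.sub (continuous_id.dist continuous_const)).max continuous_const)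

/-- Denominator of the partition of unity. -/
noncomputable def denom (G : Type*) [Group G] [MulAction G X] (R : ℝ) (x₀ : X) (x : X) : ℝ :=
  ∑ᶠ γ : G, bump R x₀ γ x

lemma denom_eq_sum (R : ℝ) (x₀ : X) (x : X) {F : Finset G}
    (hF : ∀ γ : G, bump R x₀ γ x ≠ 0 → γ ∈ F) :
    denom G R x₀ x = ∑ γ ∈ F, bump R x₀ γ x :=
  finsum_eq_sum_of_support_subset _ (fun γ hγ => hF γ hγ)

lemma denom_smul (hiso : ∀ (γ : G) (x y : X), dist (γ • x) (γ • y) = dist x y)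
    (R : ℝ) (x₀ : X) (η : G) (x : X) :
    denom G R x₀ (η • x) = denom G R x₀ x := by
  unfold denom
  rw [← finsum_comp_equiv (Equiv.mulLeft η)]
  exact finsum_congr fun γ => by
    simpa using bump_smul hiso R x₀ η γ x

variable {P : Type*} [MulAction G P]

/-- The basic averaged map. -/
noncomputable def alpha0 (G : Type*) [Group G] [MulAction G X] [MulAction G P] {N : ℕ} (R : ℝ) (x₀ : X) (p : P → EuclideanSpace ℝ (Fin N))
    (x : X) (z : P) : EuclideanSpace ℝ (Fin N) :=
  ∑ᶠ γ : G, (bump R x₀ γ x / denom G R x₀ x) • p (γ⁻¹ • z)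

lemma alpha0_eq_sum {N : ℕ} (R : ℝ) (x₀ : X) (p : P → EuclideanSpace ℝ (Fin N))
    (x : X) (z : P) {F : Finset G} (hF : ∀ γ : G, bump R x₀ γ x ≠ 0 → γ ∈ F) :
    alpha0 G R x₀ p x z = ∑ γ ∈ F, (bump R x₀ γ x / denom G R x₀ x) • p (γ⁻¹ • z) := by
  refine finsum_eq_sum_of_support_subset _ (fun γ hγ => ?_)
  apply hF
  intro h
  apply hγ
  simp [h]

lemma alpha0_smul (hiso : ∀ (γ : G) (x y : X), dist (γ • x) (γ • y) = dist x y)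
    {N : ℕ} (R : ℝ) (x₀ : X) (p : P → EuclideanSpace ℝ (Fin N))
    (η : G) (x : X) (z : P) :
    alpha0 G R x₀ p (η • x) (η • z) = alpha0 G R x₀ p x z := by
  unfold alpha0
  rw [← finsum_comp_equiv (Equiv.mulLeft η)]
  refine finsum_congr fun γ => ?_
  have h1 : ((Equiv.mulLeft η) γ) = η * γ := rfl
  rw [h1, bump_smul hiso, denom_smul hiso, mul_inv_rev, mul_smul, inv_smul_smul]

/-- Local-to-global Lipschitz estimate in a geodesic space. -/
lemma lipschitz_of_locally {E : Type*} [NormedAddCommGroup E]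
    {Y : Type*} [MetricSpace Y] (hgeo : IsGeodesicSpace Y) {f : Y → E} {C : ℝ}
    (h : ∀ x y : Y, dist x y ≤ 1 → ‖f x - f y‖ ≤ C * dist x y) :
    ∀ x y : Y, ‖f x - f y‖ ≤ C * dist x y := by
  intro x y
  rcases eq_or_lt_of_le (dist_nonneg (x := x) (y := y)) with hd | hd
  · have : x = y := by rwa [← dist_eq_zero, eq_comm]
    simp [this, mul_comm]
  obtain ⟨c, hc0, hcd, hcI⟩ := hgeo x y
  set d := dist x y with hdd
  set n := ⌈d⌉₊ with hn
  have hn0 : 0 < n := Nat.ceil_pos.2 hd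
  have hdn : d ≤ n := Nat.le_ceil d
  have hnR : (0 : ℝ) < n := by exact_mod_cast hn0
  -- sample points along the geodesic
  set u : ℕ → Y := fun i => c (i * d / n) with hu
  have hmem : ∀ i : ℕ, i ≤ n → (i * d / n) ∈ Set.Icc (0 : ℝ) d := by
    intro i hi
    constructor
    · positivity
    · rw [div_le_iff₀ hnR]
      have : (i : ℝ) ≤ n := by exact_mod_cast hi
      nlinarith
  have hdist : ∀ i : ℕ, i < n → dist (u i) (u (i + 1)) = d / n := by
    intro i hi
    rw [hu]
    rw [hcI _ (hmem i hi.le) _ (hmem (i + 1) hi)]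
    have : (i : ℝ) * d / n - (i + 1 : ℕ) * d / n = -(d / n) := by
      push_cast; field_simp; ring
    rw [this, abs_neg, abs_of_nonneg (by positivity)]
  have hu0 : u 0 = x := by simp [hu, hc0]
  have hun : u n = y := by
    have : (n : ℝ) * d / n = d := by field_simp
    simp [hu, this, hcd]
  calc ‖f x - f y‖ = dist (f (u 0)) (f (u n)) := by rw [hu0, hun, dist_eq_norm]
    _ ≤ ∑ i ∈ Finset.range n, dist (f (u i)) (f (u (i + 1))) :=
        dist_le_range_sum_dist (fun i => f (u i)) n
    _ ≤ ∑ _i ∈ Finset.range n, C * (d / n) := by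
        refine Finset.sum_le_sum fun i hi => ?_
        rw [dist_eq_norm]
        have hlt := Finset.mem_range.1 hi
        have := h (u i) (u (i + 1)) (by rw [hdist i hlt]; rw [div_le_one hnR]; exact hdn)
        rwa [hdist i hlt] at this
    _ = C * d := by
        rw [Finset.sum_const, Finset.card_range, nsmul_eq_mul]
        field_simp

end PropThree

set_option maxHeartbeats 1000000 in
open PropThree in
/-- Proposition 3 of the paper: let `Γ` (with finite symmetric generating set `S`)
act freely, properly discontinuously and cocompactly by isometries on a proper
geodesic metric space `X`, and act continuously and properly on a locally compact
Hausdorff space `P`. If `p : P → ℝ^N` is a continuous proper map satisfying the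
Displacement Bound Condition `‖p z − p (γ • z)‖ ≤ ‖γ‖_S`, then there is a
continuous map `α : X × P → ℝ^N` that is (1) invariant under the diagonal action,
(2) proper on every slice `{x} × P`, and (3) `1`-Lipschitz on every slice `X × {z}`. -/
theorem exists_lipschitz_representation
    {G : Type*} [Group G] (S : Set G)
    (hSfin : S.Finite) (hSsymm : S⁻¹ = S) (hSgen : Subgroup.closure S = ⊤)
    {X : Type*} [MetricSpace X] [ProperSpace X] (hgeo : IsGeodesicSpace X)
    [MulAction G X]
    (hisoX : ∀ γ : G, Isometry fun x : X => γ • x)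
    (hfree : ∀ (γ : G) (x : X), γ • x = x → γ = 1)
    (hdisc : ∀ K : Set X, IsCompact K →
      {γ : G | ((fun x : X => γ • x) '' K ∩ K).Nonempty}.Finite)
    (hcocompact : ∃ (K : ℝ) (x₀ : X), ∀ x : X, ∃ γ : G, dist x (γ • x₀) ≤ K)
    {P : Type*} [TopologicalSpace P] [LocallyCompactSpace P] [T2Space P]
    [MulAction G P]
    (hcontP : ∀ γ : G, Continuous fun z : P => γ • z)
    (hproperP : ∀ K : Set P, IsCompact K →
      {γ : G | ((fun z : P => γ • z) '' K ∩ K).Nonempty}.Finite)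
    {N : ℕ} (p : P → EuclideanSpace ℝ (Fin N))
    (hpcont : Continuous p)
    (hpproper : ∀ K : Set (EuclideanSpace ℝ (Fin N)), IsCompact K →
      IsCompact (p ⁻¹' K))
    (hdbc : ∀ (γ : G) (z : P), ‖p z - p (γ • z)‖ ≤ (wordNorm S γ : ℝ)) :
    ∃ α : X → P → EuclideanSpace ℝ (Fin N),
      Continuous (fun q : X × P => α q.1 q.2) ∧
      (∀ (γ : G) (x : X) (z : P), α (γ • x) (γ • z) = α x z) ∧
      (∀ (x : X) (K : Set (EuclideanSpace ℝ (Fin N))), IsCompact K →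
        IsCompact ((fun z : P => α x z) ⁻¹' K)) ∧
      (∀ z : P, LipschitzWith 1 fun x : X => α x z) := by
  classical
  obtain ⟨K₀, x₀, hK₀⟩ := hcocompact
  set Kc : ℝ := max K₀ 0 with hKc
  have hKnn : 0 ≤ Kc := le_max_right _ _
  have hcc : ∀ x : X, ∃ γ : G, dist x (γ • x₀) ≤ Kc := fun x =>
    (hK₀ x).imp fun γ h => h.trans (le_max_left _ _)
  set R : ℝ := Kc + 1 with hRdef
  have hR1 : 1 ≤ R := by simp [hRdef]; linarith
  have hR0 : 0 ≤ R := by linarith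
  have hiso' : ∀ (γ : G) (x y : X), dist (γ • x) (γ • y) = dist x y := fun γ x y =>
    (hisoX γ).dist_eq x y
  -- finiteness of orbit points near `x₀`
  have hfin : ∀ r : ℝ, {γ : G | dist (γ • x₀) x₀ ≤ r}.Finite := by
    intro r
    rcases lt_or_ge r 0 with h | h
    · convert Set.finite_empty
      ext γ
      simp only [Set.mem_setOf_eq, Set.mem_empty_iff_false, iff_false]
      intro hγ
      linarith [dist_nonneg (x := γ • x₀) (y := x₀)]
    · refine (hdisc (Metric.closedBall x₀ r) (isCompact_closedBall _ _)).subset ?_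
      intro γ hγ
      exact ⟨γ • x₀, ⟨x₀, by simp [h], rfl⟩, by simpa [Metric.mem_closedBall] using hγ⟩
  have Ffin : ∀ (x : X) (r : ℝ), {γ : G | dist x (γ • x₀) ≤ r}.Finite := by
    intro x r
    refine (hfin (r + dist x x₀)).subset fun γ hγ => ?_
    simp only [Set.mem_setOf_eq] at *
    calc dist (γ • x₀) x₀ ≤ dist (γ • x₀) x + dist x x₀ := dist_triangle _ _ _
      _ ≤ r + dist x x₀ := by rw [dist_comm]; linarith
  -- denominator bounds
  have hD1 : ∀ x : X, 1 ≤ denom G R x₀ x := by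
    intro x
    obtain ⟨γ, hγ⟩ := hcc x
    have hb : 1 ≤ bump R x₀ γ x := by
      have := le_bump R x₀ γ x
      have : R - dist x (γ • x₀) ≥ 1 := by simp [hRdef]; linarith
      linarith [le_bump R x₀ γ x]
    have hmem : γ ∈ (Ffin x R).toFinset := by
      simp only [Set.Finite.mem_toFinset, Set.mem_setOf_eq]
      linarith
    have heq : denom G R x₀ x = ∑ η ∈ (Ffin x R).toFinset, bump R x₀ η x := by
      refine denom_eq_sum R x₀ x fun η hη => ?_
      simp only [Set.Finite.mem_toFinset, Set.mem_setOf_eq]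
      exact (dist_lt_of_bump_ne hη).le
    rw [heq]
    calc (1 : ℝ) ≤ bump R x₀ γ x := hb
      _ ≤ ∑ η ∈ (Ffin x R).toFinset, bump R x₀ η x :=
          Finset.single_le_sum (fun η _ => bump_nonneg R x₀ η x) hmem
  have hDpos : ∀ x : X, 0 < denom G R x₀ x := fun x => lt_of_lt_of_le one_pos (hD1 x)
  have hDne : ∀ x : X, denom G R x₀ x ≠ 0 := fun x => (hDpos x).ne'
  -- partition of unity sums to one over suitable finsets
  have hsum_one : ∀ (x : X) (F : Finset G), (∀ γ : G, bump R x₀ γ x ≠ 0 → γ ∈ F) →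
      ∑ γ ∈ F, bump R x₀ γ x / denom G R x₀ x = 1 := by
    intro x F hF
    rw [← Finset.sum_div, ← denom_eq_sum R x₀ x hF, div_self (hDne x)]
  set α₀ : X → P → EuclideanSpace ℝ (Fin N) := alpha0 G R x₀ p with hα₀
  -- continuity of the denominator
  have hDcont : Continuous (denom G R x₀) := by
    rw [continuous_iff_continuousAt]
    intro x
    set F : Finset G := (Ffin x (R + 1)).toFinset with hF
    have hev : ∀ x' : X, dist x' x < 1 →
        denom G R x₀ x' = ∑ γ ∈ F, bump R x₀ γ x' := by
      intro x' hx'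
      refine denom_eq_sum R x₀ x' fun γ hγ => ?_
      have := dist_lt_of_bump_ne hγ
      simp only [hF, Set.Finite.mem_toFinset, Set.mem_setOf_eq]
      calc dist x (γ • x₀) ≤ dist x x' + dist x' (γ • x₀) := dist_triangle _ _ _
        _ ≤ R + 1 := by rw [dist_comm] at hx'; linarith
    have hcF : Continuous fun x' : X => ∑ γ ∈ F, bump R x₀ γ x' :=
      continuous_finset_sum _ fun γ _ => bump_cont R x₀ γ
    refine ContinuousAt.congr hcF.continuousAt ?_
    refine Filter.eventuallyEq_of_mem (Metric.ball_mem_nhds x one_pos) fun x' hx' => ?_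
    exact (hev x' (by simpa [Metric.mem_ball] using hx')).symm
  -- joint continuity of α₀
  have hcont : Continuous (fun q : X × P => α₀ q.1 q.2) := by
    rw [continuous_iff_continuousAt]
    rintro ⟨x, z⟩
    set F : Finset G := (Ffin x (R + 1)).toFinset with hF
    have hev : ∀ q : X × P, dist q.1 x < 1 →
        α₀ q.1 q.2 = ∑ γ ∈ F, (bump R x₀ γ q.1 / denom G R x₀ q.1) • p (γ⁻¹ • q.2) := by
      rintro ⟨x', z'⟩ hx'
      refine alpha0_eq_sum R x₀ p x' z' fun γ hγ => ?_
      have := dist_lt_of_bump_ne hγ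
      simp only [hF, Set.Finite.mem_toFinset, Set.mem_setOf_eq]
      calc dist x (γ • x₀) ≤ dist x x' + dist x' (γ • x₀) := dist_triangle _ _ _
        _ ≤ R + 1 := by rw [dist_comm] at hx'; linarith
    have hcF : Continuous fun q : X × P =>
        ∑ γ ∈ F, (bump R x₀ γ q.1 / denom G R x₀ q.1) • p (γ⁻¹ • q.2) := by
      refine continuous_finset_sum _ fun γ _ => Continuous.smul (f := fun q : X × P => bump R x₀ γ q.1 / denom G R x₀ q.1)
        (g := fun q : X × P => p (γ⁻¹ • q.2)) ?_ ?_
      · exact ((bump_cont R x₀ γ).comp continuous_fst).div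
          (hDcont.comp continuous_fst) (fun q => hDne q.1)
      · exact hpcont.comp ((hcontP γ⁻¹).comp continuous_snd)
    refine ContinuousAt.congr hcF.continuousAt ?_
    have hmem : {q : X × P | dist q.1 x < 1} ∈ nhds (x, z) := by
      have ho : IsOpen {q : X × P | dist q.1 x < 1} :=
        (Metric.isOpen_ball (x := x) (ε := 1)).preimage continuous_fst
      exact ho.mem_nhds (by simp)
    exact Filter.eventuallyEq_of_mem hmem fun q hq => (hev q hq).symm
  -- invariance
  have hinv : ∀ (γ : G) (x : X) (z : P), α₀ (γ • x) (γ • z) = α₀ x z := fun γ x z =>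
    alpha0_smul hiso' R x₀ p γ x z
  -- properness in z for each x
  have hprop : ∀ (x : X) (K : Set (EuclideanSpace ℝ (Fin N))), IsCompact K →
      IsCompact ((fun z : P => α₀ x z) ⁻¹' K) := by
    intro x K hK
    set F : Finset G := (Ffin x R).toFinset with hF
    have hFsupp : ∀ γ : G, bump R x₀ γ x ≠ 0 → γ ∈ F := by
      intro γ hγ
      simp only [hF, Set.Finite.mem_toFinset, Set.mem_setOf_eq]
      exact (dist_lt_of_bump_ne hγ).le
    set C : ℝ := ((F.sup fun γ => wordNorm S γ⁻¹ : ℕ) : ℝ) with hC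
    have hCnn : (0 : ℝ) ≤ C := by positivity
    have hbound : ∀ z : P, ‖α₀ x z - p z‖ ≤ C := by
      intro z
      have heq : α₀ x z - p z =
          ∑ γ ∈ F, (bump R x₀ γ x / denom G R x₀ x) • (p (γ⁻¹ • z) - p z) := by
        rw [hα₀, alpha0_eq_sum R x₀ p x z hFsupp]
        have h1 : ∑ γ ∈ F, (bump R x₀ γ x / denom G R x₀ x) • (p (γ⁻¹ • z) - p z)
            = (∑ γ ∈ F, (bump R x₀ γ x / denom G R x₀ x) • p (γ⁻¹ • z))
              - (∑ γ ∈ F, bump R x₀ γ x / denom G R x₀ x) • p z := by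
          rw [Finset.sum_smul, ← Finset.sum_sub_distrib]
          exact Finset.sum_congr rfl fun γ _ => smul_sub _ _ _
        rw [h1, hsum_one x F hFsupp, one_smul]
      rw [heq]
      calc ‖∑ γ ∈ F, (bump R x₀ γ x / denom G R x₀ x) • (p (γ⁻¹ • z) - p z)‖
          ≤ ∑ γ ∈ F, ‖(bump R x₀ γ x / denom G R x₀ x) • (p (γ⁻¹ • z) - p z)‖ :=
            norm_sum_le _ _
        _ ≤ ∑ γ ∈ F, (bump R x₀ γ x / denom G R x₀ x) * C := by
            refine Finset.sum_le_sum fun γ hγ => ?_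
            have hdiv : 0 ≤ bump R x₀ γ x / denom G R x₀ x :=
              div_nonneg (bump_nonneg R x₀ γ x) (hDpos x).le
            rw [norm_smul, Real.norm_of_nonneg hdiv]
            refine mul_le_mul_of_nonneg_left ?_ hdiv
            calc ‖p (γ⁻¹ • z) - p z‖ = ‖p z - p (γ⁻¹ • z)‖ := norm_sub_rev _ _
              _ ≤ (wordNorm S γ⁻¹ : ℝ) := hdbc γ⁻¹ z
              _ ≤ C := by
                  rw [hC]
                  exact_mod_cast Finset.le_sup (f := fun γ : G => wordNorm S γ⁻¹) hγ
        _ = C := by rw [← Finset.sum_mul, hsum_one x F hFsupp, one_mul]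
    obtain ⟨r, hr⟩ := hK.isBounded.subset_closedBall 0
    have hsub : (fun z : P => α₀ x z) ⁻¹' K ⊆ p ⁻¹' Metric.closedBall 0 (r + C) := by
      intro z hz
      have h1 : ‖α₀ x z‖ ≤ r := by
        have := hr hz
        simpa [Metric.mem_closedBall, dist_eq_norm] using this
      have h2 := hbound z
      simp only [Set.mem_preimage, Metric.mem_closedBall, dist_eq_norm, sub_zero]
      calc ‖p z‖ = ‖α₀ x z - (α₀ x z - p z)‖ := by rw [sub_sub_cancel]
        _ ≤ ‖α₀ x z‖ + ‖α₀ x z - p z‖ := norm_sub_le _ _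
        _ ≤ r + C := add_le_add h1 h2
    refine IsCompact.of_isClosed_subset
      (hpproper _ (isCompact_closedBall _ _)) ?_ hsub
    exact IsClosed.preimage (hcont.comp (Continuous.prodMk_right x)) hK.isClosed
  -- Lipschitz estimate
  have hlip : ∃ C : ℝ, 0 ≤ C ∧ ∀ (z : P) (x y : X),
      ‖α₀ x z - α₀ y z‖ ≤ C * dist x y := by
    obtain ⟨T, hTspec⟩ : ∃ T : Finset G, ∀ g : G, dist (g • x₀) x₀ ≤ 2 * R + 1 → g ∈ T :=
      ⟨(hfin (2 * R + 1)).toFinset, fun g h => (hfin (2 * R + 1)).mem_toFinset.2 h⟩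
    set M : ℝ := (T.card : ℝ) with hM
    set W : ℝ := ((T.sup fun g => wordNorm S g : ℕ) : ℝ) with hW
    have hMnn : 0 ≤ M := by rw [hM]; exact Nat.cast_nonneg _
    have hWnn : 0 ≤ W := by rw [hW]; exact Nat.cast_nonneg _
    have h1RM : 0 ≤ 1 + R * M := by nlinarith
    refine ⟨M * ((1 + R * M) * W), mul_nonneg hMnn (mul_nonneg h1RM hWnn), ?_⟩
    intro z
    have hloc : ∀ x y : X, dist x y ≤ 1 →
        ‖α₀ x z - α₀ y z‖ ≤ (M * ((1 + R * M) * W)) * dist x y := by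
      intro x y hxy
      obtain ⟨γ₀, hγ₀⟩ := hcc x
      obtain ⟨F, hFiff⟩ : ∃ F : Finset G, ∀ g : G, g ∈ F ↔ dist x (g • x₀) ≤ R + 1 :=
        ⟨(Ffin x (R + 1)).toFinset, fun g => (Ffin x (R + 1)).mem_toFinset⟩
      have hFx : ∀ γ : G, bump R x₀ γ x ≠ 0 → γ ∈ F := by
        intro γ hγ
        have := dist_lt_of_bump_ne hγ
        rw [hFiff]
        linarith
      have hFy : ∀ γ : G, bump R x₀ γ y ≠ 0 → γ ∈ F := by
        intro γ hγ
        have h1 := dist_lt_of_bump_ne hγ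
        rw [hFiff]
        calc dist x (γ • x₀) ≤ dist x y + dist y (γ • x₀) := dist_triangle _ _ _
          _ ≤ R + 1 := by linarith
      have hTmem : ∀ γ ∈ F, γ₀⁻¹ * γ ∈ T := by
        intro γ hγ
        have h1 : dist x (γ • x₀) ≤ R + 1 := (hFiff γ).1 hγ
        have h2 : dist (γ • x₀) (γ₀ • x₀) ≤ (R + 1) + Kc := by
          calc dist (γ • x₀) (γ₀ • x₀) ≤ dist (γ • x₀) x + dist x (γ₀ • x₀) :=
              dist_triangle _ _ _
            _ ≤ (R + 1) + Kc := by rw [dist_comm (γ • x₀) x]; linarith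
        have h3 : dist ((γ₀⁻¹ * γ) • x₀) x₀ = dist (γ • x₀) (γ₀ • x₀) := by
          rw [← hiso' γ₀ ((γ₀⁻¹ * γ) • x₀) x₀, ← mul_smul, mul_inv_cancel_left]
        refine hTspec _ ?_
        rw [h3]
        have : R = Kc + 1 := hRdef
        linarith
      have hcard : (F.card : ℝ) ≤ M := by
        have : F.card ≤ T.card := by
          refine Finset.card_le_card_of_injOn (fun γ => γ₀⁻¹ * γ)
            (fun γ hγ => hTmem γ hγ) ?_
          intro a _ b _ h
          simpa using mul_left_cancel h
        rw [hM]
        exact_mod_cast this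
      have hDxF : denom G R x₀ x = ∑ γ ∈ F, bump R x₀ γ x := denom_eq_sum _ _ _ hFx
      have hDyF : denom G R x₀ y = ∑ γ ∈ F, bump R x₀ γ y := denom_eq_sum _ _ _ hFy
      have hDdiff : |denom G R x₀ x - denom G R x₀ y| ≤ M * dist x y := by
        rw [hDxF, hDyF, ← Finset.sum_sub_distrib]
        calc |∑ γ ∈ F, (bump R x₀ γ x - bump R x₀ γ y)|
            ≤ ∑ γ ∈ F, |bump R x₀ γ x - bump R x₀ γ y| := Finset.abs_sum_le_sum_abs _ _
          _ ≤ ∑ _γ ∈ F, dist x y := Finset.sum_le_sum fun γ _ => abs_bump_sub_le R x₀ γ x y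
          _ = F.card * dist x y := by rw [Finset.sum_const, nsmul_eq_mul]
          _ ≤ M * dist x y := mul_le_mul_of_nonneg_right hcard dist_nonneg
      have hphi : ∀ γ : G,
          |bump R x₀ γ x / denom G R x₀ x - bump R x₀ γ y / denom G R x₀ y|
            ≤ (1 + R * M) * dist x y := by
        intro γ
        have hkey : bump R x₀ γ x / denom G R x₀ x - bump R x₀ γ y / denom G R x₀ y
            = (bump R x₀ γ x - bump R x₀ γ y) / denom G R x₀ x
              + bump R x₀ γ y * (denom G R x₀ y - denom G R x₀ x)
                / (denom G R x₀ x * denom G R x₀ y) := by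
          field_simp [hDne x, hDne y]
          ring
        rw [hkey]
        have hDx1 := hD1 x
        have hDy1 := hD1 y
        have t1 : |(bump R x₀ γ x - bump R x₀ γ y) / denom G R x₀ x| ≤ dist x y := by
          rw [abs_div, abs_of_pos (hDpos x)]
          calc |bump R x₀ γ x - bump R x₀ γ y| / denom G R x₀ x
              ≤ |bump R x₀ γ x - bump R x₀ γ y| := div_le_self (abs_nonneg _) hDx1
            _ ≤ dist x y := abs_bump_sub_le R x₀ γ x y
        have t2 : |bump R x₀ γ y * (denom G R x₀ y - denom G R x₀ x)
            / (denom G R x₀ x * denom G R x₀ y)| ≤ R * (M * dist x y) := by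
          rw [abs_div, abs_mul, abs_of_pos (mul_pos (hDpos x) (hDpos y)),
            abs_of_nonneg (bump_nonneg R x₀ γ y)]
          have hprod : 1 ≤ denom G R x₀ x * denom G R x₀ y := by
            simpa using mul_le_mul hDx1 hDy1 zero_le_one (zero_le_one.trans hDx1)
          have hnum : bump R x₀ γ y * |denom G R x₀ y - denom G R x₀ x|
              ≤ R * (M * dist x y) := by
            have h5 : |denom G R x₀ y - denom G R x₀ x| ≤ M * dist x y := by
              rw [abs_sub_comm]; exact hDdiff
            have h6 := bump_le R hR0 x₀ γ y
            have h7 := bump_nonneg R x₀ γ y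
            have h8 : (0:ℝ) ≤ |denom G R x₀ y - denom G R x₀ x| := abs_nonneg _
            exact mul_le_mul h6 h5 h8 hR0
          calc bump R x₀ γ y * |denom G R x₀ y - denom G R x₀ x|
                / (denom G R x₀ x * denom G R x₀ y)
              ≤ bump R x₀ γ y * |denom G R x₀ y - denom G R x₀ x| :=
                div_le_self (mul_nonneg (bump_nonneg R x₀ γ y) (abs_nonneg _)) hprod
            _ ≤ R * (M * dist x y) := hnum
        calc |(bump R x₀ γ x - bump R x₀ γ y) / denom G R x₀ x
              + bump R x₀ γ y * (denom G R x₀ y - denom G R x₀ x)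
                / (denom G R x₀ x * denom G R x₀ y)|
            ≤ |(bump R x₀ γ x - bump R x₀ γ y) / denom G R x₀ x|
              + |bump R x₀ γ y * (denom G R x₀ y - denom G R x₀ x)
                / (denom G R x₀ x * denom G R x₀ y)| := abs_add_le _ _
          _ ≤ dist x y + R * (M * dist x y) := add_le_add t1 t2
          _ = (1 + R * M) * dist x y := by ring
      have hax : α₀ x z = ∑ γ ∈ F, (bump R x₀ γ x / denom G R x₀ x) • p (γ⁻¹ • z) :=
        alpha0_eq_sum R x₀ p x z hFx
      have hay : α₀ y z = ∑ γ ∈ F, (bump R x₀ γ y / denom G R x₀ y) • p (γ⁻¹ • z) :=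
        alpha0_eq_sum R x₀ p y z hFy
      have hcoef : ∑ γ ∈ F, (bump R x₀ γ x / denom G R x₀ x
          - bump R x₀ γ y / denom G R x₀ y) = 0 := by
        rw [Finset.sum_sub_distrib, hsum_one x F hFx, hsum_one y F hFy, sub_self]
      have hdiffsum : α₀ x z - α₀ y z = ∑ γ ∈ F,
          (bump R x₀ γ x / denom G R x₀ x - bump R x₀ γ y / denom G R x₀ y)
            • (p (γ⁻¹ • z) - p (γ₀⁻¹ • z)) := by
        have h1 : ∑ γ ∈ F, (bump R x₀ γ x / denom G R x₀ x
              - bump R x₀ γ y / denom G R x₀ y) • (p (γ⁻¹ • z) - p (γ₀⁻¹ • z))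
            = (∑ γ ∈ F, (bump R x₀ γ x / denom G R x₀ x
                - bump R x₀ γ y / denom G R x₀ y) • p (γ⁻¹ • z))
              - (∑ γ ∈ F, (bump R x₀ γ x / denom G R x₀ x
                - bump R x₀ γ y / denom G R x₀ y)) • p (γ₀⁻¹ • z) := by
          rw [Finset.sum_smul, ← Finset.sum_sub_distrib]
          exact Finset.sum_congr rfl fun γ _ => smul_sub _ _ _
        rw [h1, hcoef, zero_smul, sub_zero, hax, hay, ← Finset.sum_sub_distrib]
        exact Finset.sum_congr rfl fun γ _ => (sub_smul _ _ _).symm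
      rw [hdiffsum]
      calc ‖∑ γ ∈ F, (bump R x₀ γ x / denom G R x₀ x - bump R x₀ γ y / denom G R x₀ y)
              • (p (γ⁻¹ • z) - p (γ₀⁻¹ • z))‖
          ≤ ∑ γ ∈ F, ‖(bump R x₀ γ x / denom G R x₀ x - bump R x₀ γ y / denom G R x₀ y)
              • (p (γ⁻¹ • z) - p (γ₀⁻¹ • z))‖ := norm_sum_le _ _
        _ ≤ ∑ _γ ∈ F, ((1 + R * M) * dist x y) * W := by
            refine Finset.sum_le_sum fun γ hγ => ?_
            rw [norm_smul, Real.norm_eq_abs]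
            refine mul_le_mul (hphi γ) ?_ (norm_nonneg _) ?_
            · have hg : (γ₀⁻¹ * γ) • (γ⁻¹ • z) = γ₀⁻¹ • z := by
                rw [smul_smul, mul_inv_cancel_right]
              calc ‖p (γ⁻¹ • z) - p (γ₀⁻¹ • z)‖
                  = ‖p (γ⁻¹ • z) - p ((γ₀⁻¹ * γ) • (γ⁻¹ • z))‖ := by rw [hg]
                _ ≤ (wordNorm S (γ₀⁻¹ * γ) : ℝ) := hdbc _ _
                _ ≤ W := by
                    rw [hW]
                    exact_mod_cast Finset.le_sup (f := fun g : G => wordNorm S g)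
                      (hTmem γ hγ)
            · exact mul_nonneg h1RM dist_nonneg
        _ = F.card * (((1 + R * M) * dist x y) * W) := by
            rw [Finset.sum_const, nsmul_eq_mul]
        _ ≤ M * (((1 + R * M) * dist x y) * W) := by
            exact mul_le_mul_of_nonneg_right hcard
              (mul_nonneg (mul_nonneg h1RM dist_nonneg) hWnn)
        _ = (M * ((1 + R * M) * W)) * dist x y := by ring
    exact lipschitz_of_locally hgeo hloc
  obtain ⟨C, hCnn, hC⟩ := hlip
  set c : ℝ := max C 1 with hc
  have hc1 : (1 : ℝ) ≤ c := le_max_right _ _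
  have hc0 : (0 : ℝ) < c := lt_of_lt_of_le one_pos hc1
  refine ⟨fun x z => c⁻¹ • α₀ x z, ?_, ?_, ?_, ?_⟩
  · exact hcont.const_smul c⁻¹
  · intro γ x z
    show c⁻¹ • α₀ (γ • x) (γ • z) = c⁻¹ • α₀ x z
    rw [hinv]
  · intro x K hK
    have hKc' : IsCompact ((fun v : EuclideanSpace ℝ (Fin N) => c • v) '' K) :=
      hK.image (continuous_const_smul c)
    have heq : (fun z : P => c⁻¹ • α₀ x z) ⁻¹' K =
        (fun z : P => α₀ x z) ⁻¹' ((fun v => c • v) '' K) := by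
      ext z
      simp only [Set.mem_preimage, Set.mem_image]
      constructor
      · intro h; exact ⟨c⁻¹ • α₀ x z, h, by rw [smul_inv_smul₀ hc0.ne']⟩
      · rintro ⟨w, hw, hw'⟩
        rw [← hw', inv_smul_smul₀ hc0.ne']
        exact hw
    rw [heq]
    exact hprop x _ hKc'
  · intro z
    refine LipschitzWith.of_dist_le_mul fun x y => ?_
    have hgoal : dist (c⁻¹ • α₀ x z) (c⁻¹ • α₀ y z) ≤ dist x y := by
      rw [dist_eq_norm, ← smul_sub, norm_smul, norm_inv, Real.norm_of_nonneg hc0.le]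
      calc c⁻¹ * ‖α₀ x z - α₀ y z‖ ≤ c⁻¹ * (C * dist x y) := by
            exact mul_le_mul_of_nonneg_left (hC z x y) (by positivity)
        _ ≤ dist x y := by
            rw [← mul_assoc]
            have h9 : c⁻¹ * C ≤ 1 := by
              rw [inv_mul_le_iff₀ hc0, mul_one]
              exact le_max_left _ _
            nlinarith [dist_nonneg (x := x) (y := y)]
    simpa using hgoal
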